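/- Let p be an odd prime, m ≥ 1, a ∈ F_{p^m}^×, and f(x) = x^{p^m} + a·x as a self-map of the algebraic closure of F_p. If p^m - 1 divides n, then the number of fixed points of f^n (counted without multiplicity) equals p^{(n - p^{v_p(n)})·m}. -/

import Mathlib

open Finset Polynomial

section Aux

variable {p : ℕ} [hp : Fact p.Prime]

lemma my_dvd_choose (n k : ℕ) (hn : 0 < n) (hk : 0 < k)
    (hks : k < p ^ padicValNat p n) : p ∣ n.choose k := by
  set v := padicValNat p n with hv
  have hkn : k ≤ n := hks.le.trans (Nat.le_of_dvd hn pow_padicValNat_dvd)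
  have hC : 0 < n.choose k := Nat.choose_pos hkn
  have key : k * n.choose k = n * (n-1).choose (k-1) := by
    obtain ⟨n', rfl⟩ := Nat.exists_eq_succ_of_ne_zero hn.ne'
    obtain ⟨k', rfl⟩ := Nat.exists_eq_succ_of_ne_zero hk.ne'
    simpa [mul_comm] using (Nat.add_one_mul_choose_eq n' k').symm
  have hdvd : p ^ v ∣ k * n.choose k := key ▸ Dvd.dvd.mul_right pow_padicValNat_dvd _
  have hkv : padicValNat p k < v := by
    by_contra h
    push_neg at h
    have : p ^ v ∣ k := (pow_dvd_pow p h).trans pow_padicValNat_dvd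
    exact absurd (Nat.le_of_dvd hk this) (not_le.mpr hks)
  have h1 : v ≤ padicValNat p (k * n.choose k) :=
    (padicValNat_dvd_iff_le (by positivity)).mp hdvd
  rw [padicValNat.mul hk.ne' hC.ne'] at h1
  exact dvd_of_one_le_padicValNat (by omega)

lemma my_not_dvd_choose (n : ℕ) (hn : 0 < n) :
    ¬ p ∣ n.choose (p ^ padicValNat p n) := by
  set v := padicValNat p n with hv
  have hmod : (n.choose (p ^ v) : ℤ) ≡ (n / p ^ v).choose (p ^ v / p ^ v) *
      ∏ i ∈ range v, (n / p ^ i % p).choose (p ^ v / p ^ i % p) [ZMOD p] :=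
    Choose.choose_modEq_choose_mul_prod_range_choose v
  have hprod : ∀ i ∈ range v, (n / p ^ i % p).choose (p ^ v / p ^ i % p) = 1 := by
    intro i hi
    rw [mem_range] at hi
    have h0 : p ^ v / p ^ i % p = 0 := by
      rw [Nat.pow_div hi.le hp.out.pos]
      exact Nat.eq_zero_of_dvd_of_lt ((Nat.dvd_mod_iff (dvd_refl p)).mpr (dvd_pow_self p (Nat.sub_ne_zero_of_lt hi))) (Nat.mod_lt _ hp.out.pos)
    rw [h0, Nat.choose_zero_right]
  rw [Finset.prod_congr rfl hprod, Finset.prod_const_one, Nat.div_self (pow_pos hp.out.pos v),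
    Nat.choose_one_right] at hmod
  intro hdvd
  have h2 : ¬ p ∣ n / p ^ v := by
    intro h
    have : p ^ (v + 1) ∣ n := by
      have := Nat.mul_dvd_of_dvd_div (pow_padicValNat_dvd) h
      rwa [← pow_succ] at this
    exact pow_succ_padicValNat_not_dvd hn.ne' this
  apply h2
  have hm2 : (p:ℤ) ∣ ((n / p ^ v : ℕ) : ℤ) * ((1:ℕ):ℤ) - (n.choose (p ^ v) : ℤ) :=
    Int.ModEq.dvd hmod
  have hd2 : (p:ℤ) ∣ (n.choose (p ^ v) : ℤ) := Int.natCast_dvd_natCast.mpr hdvd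
  have : (p:ℤ) ∣ ((n / p ^ v : ℕ) : ℤ) := by
    have := dvd_add hm2 hd2
    simpa using this
  exact_mod_cast this

variable {K : Type} [Field K] [IsAlgClosed K] [CharP K p]

lemma iter_formula (m n : ℕ) (a : K) (hafix : a ^ p ^ m = a) (x : K) :
    (fun y => y ^ p ^ m + a * y)^[n] x
      = ∑ k ∈ range (n + 1), (n.choose k : K) * a ^ (n - k) * x ^ p ^ (m * k) := by
  have hexp : ExpChar K p := ExpChar.prime hp.out
  -- endomorphisms
  set Φ : AddMonoid.End K := (iterateFrobenius K p m).toAddMonoidHom with hΦdef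
  set A : AddMonoid.End K := AddMonoidHom.mulLeft a with hAdef
  have hΦapp : ∀ y : K, Φ y = y ^ p ^ m := by
    intro y
    show iterateFrobenius K p m y = y ^ p ^ m
    rw [iterateFrobenius_def]
  have hAapp : ∀ y : K, A y = a * y := fun y => rfl
  have hApow : ∀ (j : ℕ) (y : K), (A ^ j) y = a ^ j * y := by
    intro j
    induction j with
    | zero => intro y; simp [AddMonoid.End.one_apply]
    | succ j ih =>
      intro y
      rw [pow_succ]
      show (A ^ j) (A y) = a ^ (j + 1) * y
      rw [hAapp, ih, pow_succ]
      ring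
  have haq : ∀ (k : ℕ), a ^ p ^ (m * k) = a := by
    intro k
    induction k with
    | zero => simp
    | succ k ih =>
      rw [Nat.mul_succ, pow_add, pow_mul, ih, hafix]
  have hΦpow : ∀ (k : ℕ) (y : K), (Φ ^ k) y = y ^ p ^ (m * k) := by
    intro k
    induction k with
    | zero => intro y; simp [AddMonoid.End.one_apply]
    | succ k ih =>
      intro y
      rw [pow_succ']
      show Φ ((Φ ^ k) y) = _
      rw [ih, hΦapp, ← pow_mul, ← pow_add, Nat.mul_succ]
  have hcomm : Commute Φ A := by
    apply AddMonoidHom.ext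
    intro y
    show Φ (A y) = A (Φ y)
    rw [hΦapp, hAapp, hAapp, hΦapp, mul_pow, hafix]
  have hiter : ∀ (N : ℕ) (y : K),
      (fun y => y ^ p ^ m + a * y)^[N] y = ((Φ + A) ^ N) y := by
    intro N
    induction N with
    | zero => intro y; simp [AddMonoid.End.one_apply]
    | succ N ih =>
      intro y
      rw [Function.iterate_succ_apply', ih, pow_succ']
      show _ = (Φ + A) (((Φ + A) ^ N) y)
      show _ = Φ (((Φ + A) ^ N) y) + A (((Φ + A) ^ N) y)
      rw [hΦapp, hAapp]
  rw [hiter n x, hcomm.add_pow]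
  rw [show ∀ (s : Finset ℕ) (f : ℕ → AddMonoid.End K) (y : K), (∑ i ∈ s, f i) y = ∑ i ∈ s, f i y
    from fun s f y => AddMonoidHom.finset_sum_apply _ _ _]
  refine Finset.sum_congr rfl fun k hk => ?_
  have : (Φ ^ k * A ^ (n - k) * (n.choose k : AddMonoid.End K)) x
      = (Φ ^ k) ((A ^ (n - k)) ((n.choose k : AddMonoid.End K) x)) := rfl
  rw [this, AddMonoid.End.natCast_apply, nsmul_eq_mul, hApow, hΦpow,
    mul_pow, mul_pow, ← pow_mul]
  have hc : ((n.choose k : K)) ^ p ^ (m * k) = (n.choose k : K) := by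
    have := map_natCast (iterateFrobenius K p (m * k)) (n.choose k)
    rwa [iterateFrobenius_def] at this
  rw [hc, mul_comm (n - k) (p ^ (m * k)), pow_mul, haq k]
  ring

end Aux

section Main

variable {p : ℕ} [hp : Fact p.Prime] {K : Type} [Field K] [IsAlgClosed K] [CharP K p]

theorem main_aux (m n : ℕ) (hm : 0 < m) (a : K) (ha : a ≠ 0) (hafix : a ^ p ^ m = a)
    (hn : 0 < n) (hdvd : p ^ m - 1 ∣ n) :
    Set.ncard {x : K | (fun y => y ^ p ^ m + a * y)^[n] x = x} =
      p ^ ((n - p ^ padicValNat p n) * m) := by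
  have hp2 : 2 ≤ p := hp.out.two_le
  set v := padicValNat p n with hv
  set s := p ^ v with hs
  have hsn : s ≤ n := Nat.le_of_dvd hn pow_padicValNat_dvd
  have hspos : 0 < s := pow_pos hp.out.pos v
  have hq1 : 1 ≤ p ^ m := Nat.one_le_pow _ _ hp.out.pos
  -- a ^ n = 1
  have han : a ^ n = 1 := by
    have h1 : a ^ (p ^ m - 1) = 1 := by
      have : a ^ (p ^ m - 1) * a = 1 * a := by
        rw [← pow_succ, Nat.sub_add_cancel hq1, hafix, one_mul]
      exact mul_right_cancel₀ ha this
    obtain ⟨t, rfl⟩ := hdvd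
    rw [pow_mul, h1, one_pow]
  -- the coefficients
  have haqk : ∀ k : ℕ, a ^ p ^ (m * k) = a := by
    intro k
    induction k with
    | zero => simp
    | succ k ih => rw [Nat.mul_succ, pow_add, pow_mul, ih, hafix]
  -- choose roots
  have hdex : ∀ j : ℕ, ∃ z : K, z ^ p ^ (m * s) =
      (n.choose (j + s) : K) * a ^ (n - (j + s)) :=
    fun j => IsAlgClosed.exists_pow_nat_eq _ (pow_pos hp.out.pos _)
  set d : ℕ → K := fun j => (hdex j).choose with hddef
  have hd : ∀ j : ℕ, (d j) ^ p ^ (m * s) = (n.choose (j + s) : K) * a ^ (n - (j + s)) :=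
    fun j => (hdex j).choose_spec
  set h : K[X] := ∑ j ∈ range (n - s + 1), Polynomial.C (d j) * X ^ (p ^ (m * j)) with hhdef
  -- evaluation identity
  have heval : ∀ x : K, (h.eval x) ^ p ^ (m * s)
      = ∑ k ∈ Ico s (n + 1), (n.choose k : K) * a ^ (n - k) * x ^ p ^ (m * k) := by
    intro x
    have e1 : h.eval x = ∑ j ∈ range (n - s + 1), d j * x ^ p ^ (m * j) := by
      rw [hhdef, eval_finset_sum]
      exact Finset.sum_congr rfl fun j _ => by simp
    have e2 : (∑ j ∈ range (n - s + 1), d j * x ^ p ^ (m * j)) ^ p ^ (m * s)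
        = ∑ j ∈ range (n - s + 1), (d j * x ^ p ^ (m * j)) ^ p ^ (m * s) := by
      have := map_sum (iterateFrobenius K p (m * s))
        (fun j => d j * x ^ p ^ (m * j)) (range (n - s + 1))
      simpa only [iterateFrobenius_def] using this
    rw [e1, e2, Finset.sum_Ico_eq_sum_range]
    have hns : n + 1 - s = n - s + 1 := by omega
    rw [hns]
    refine Finset.sum_congr rfl fun j _ => ?_
    rw [mul_pow, hd j, ← pow_mul, ← pow_add, ← Nat.mul_add, add_comm s j]
  -- fixed-point set equals root set
  have hne : (0:K) ≠ 1 := zero_ne_one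
  have hsetr : {x : K | (fun y => y ^ p ^ m + a * y)^[n] x = x}
      = {x : K | h.eval x = 0} := by
    ext x
    simp only [Set.mem_setOf_eq]
    rw [iter_formula m n a hafix x]
    have hsplit : ∑ k ∈ range (n + 1), (n.choose k : K) * a ^ (n - k) * x ^ p ^ (m * k)
        = x + ∑ k ∈ Ico s (n + 1), (n.choose k : K) * a ^ (n - k) * x ^ p ^ (m * k) := by
      rw [range_eq_Ico, ← Finset.sum_Ico_consecutive _ (Nat.zero_le s) (by omega)]
      congr 1
      rw [← Nat.Ico_zero_eq_range] at *
      rw [show (0:ℕ) = 0 from rfl]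
      rw [Finset.sum_eq_single_of_mem 0 (by rw [Finset.mem_Ico]; omega)]
      · simp [han]
      · intro k hk hk0
        rw [Finset.mem_Ico] at hk
        have : (n.choose k : K) = 0 := by
          rw [CharP.cast_eq_zero_iff K p]
          exact my_dvd_choose n k hn (by omega) hk.2
        rw [this, zero_mul, zero_mul]
    rw [hsplit, ← heval x]
    constructor
    · intro hfix
      have : (h.eval x) ^ p ^ (m * s) = 0 := by linear_combination hfix - x
      exact pow_eq_zero_iff (pow_ne_zero _ (by omega : p ≠ 0)) |>.mp this
    · intro h0
      rw [h0, zero_pow (pow_ne_zero _ hp.out.ne_zero), add_zero]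
  -- h properties
  have hd0 : d 0 ≠ 0 := by
    intro h0
    have := hd 0
    rw [h0, zero_pow (pow_ne_zero _ (by omega : p ≠ 0))] at this
    have hch : (n.choose (0 + s) : K) ≠ 0 := by
      rw [Ne, CharP.cast_eq_zero_iff K p]
      simpa using my_not_dvd_choose n hn
    exact (mul_ne_zero hch (pow_ne_zero _ ha)) this.symm
  have hdt : d (n - s) ≠ 0 := by
    intro h0
    have := hd (n - s)
    rw [h0, zero_pow (pow_ne_zero _ (by omega : p ≠ 0)), Nat.sub_add_cancel hsn,
      Nat.choose_self, Nat.sub_self, pow_zero, Nat.cast_one, one_mul] at this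
    exact hne this
  have hcoeff : h.coeff (p ^ (m * (n - s))) = d (n - s) := by
    rw [hhdef, finset_sum_coeff]
    rw [Finset.sum_eq_single_of_mem (n - s) (by rw [mem_range]; omega)]
    · simp
    · intro j hjr hj
      rw [coeff_C_mul, coeff_X_pow, if_neg, mul_zero]
      intro he
      exact hj (Nat.eq_of_mul_eq_mul_left hm (Nat.pow_right_injective hp2 he.symm))
  have hh0 : h ≠ 0 := fun h0 => hdt (by rw [← hcoeff, h0, coeff_zero])
  have hdeg : h.natDegree = p ^ (m * (n - s)) := by
    refine le_antisymm ?_ (le_natDegree_of_ne_zero (by rw [hcoeff]; exact hdt))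
    apply Polynomial.natDegree_sum_le_of_forall_le
    intro j hj
    rw [mem_range] at hj
    refine (natDegree_C_mul_le _ _).trans ?_
    rw [natDegree_X_pow]
    exact Nat.pow_le_pow_right hp.out.pos (Nat.mul_le_mul_left m (by omega))
  have hder : derivative h = Polynomial.C (d 0) := by
    rw [hhdef, derivative_sum]
    rw [Finset.sum_eq_single_of_mem 0 (by rw [mem_range]; omega)]
    · simp
    · intro j hjr hj
      rw [derivative_C_mul_X_pow]
      have : ((p ^ (m * j) : ℕ) : K) = 0 := by
        rw [CharP.cast_eq_zero_iff K p]
        exact dvd_pow_self p (by positivity)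
      rw [this, mul_zero, map_zero, zero_mul]
  have hsep : h.Separable := by
    rw [Polynomial.Separable, hder]
    exact ⟨0, Polynomial.C (d 0)⁻¹, by
      rw [zero_mul, zero_add, ← Polynomial.C_mul, inv_mul_cancel₀ hd0, Polynomial.C_1]⟩
  -- counting
  have hroot : {x : K | h.eval x = 0} = h.rootSet K := by
    ext x
    rw [Polynomial.mem_rootSet]
    simp [hh0, Polynomial.aeval_def, Polynomial.eval₂_eq_eval_map]
  have hcard : Fintype.card (h.rootSet K) = h.natDegree :=
    Polynomial.card_rootSet_eq_natDegree hsep (IsAlgClosed.splits_domain h)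
  rw [hsetr, hroot, ← Nat.card_coe_set_eq, Nat.card_eq_fintype_card, hcard, hdeg,
    Nat.mul_comm]

end Main


theorem card_fixedPoints_additive_map (p m n : ℕ) [Fact p.Prime] (hp : Odd p)
    (hm : 0 < m) (a : AlgebraicClosure (ZMod p)) (ha : a ≠ 0) (hafix : a ^ p ^ m = a)
    (hn : 0 < n) (hdvd : p ^ m - 1 ∣ n) :
    Set.ncard {x : AlgebraicClosure (ZMod p) | (fun y => y ^ p ^ m + a * y)^[n] x = x} =
      p ^ ((n - p ^ padicValNat p n) * m) :=
  main_aux m n hm a ha hafix hn hdvd
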